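/- arXiv:2009.13206 — 2 statements merged into one kernel-verified Lean document; each statement's English description precedes it below -/
import Mathlib

section
/- Let p : K → L be an open continuous surjection of a compact Hausdorff space K onto a compact Hausdorff space L, and let q : Y → L' be a continuous surjection of a Hausdorff uniform space Y onto a compact Hausdorff space L'. Then a subset F ⊆ C_p^q(K,Y) has compact closure in the compact-open topology if and only if both of the following hold: (i) the set ⋃_{θ∈F} θ(K_{s(θ)}) has compact closure in Y; (ii) F is uniformly equicontinuous, i.e. for every entourage U of Y there is an entourage V of the (unique) uniformity of K such that (θ(x₁), θ(x₂)) ∈ U whenever θ ∈ F and x₁, x₂ ∈ K_{s(θ)} with (x₁,x₂) ∈ V. -/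
open Filter Topology Set Function MeasureTheory
open Uniformity
open SetRel

structure FiberMap {X L Y L' : Type} [TopologicalSpace X] [TopologicalSpace Y]
    (p : X → L) (q : Y → L') where
  src : L
  rng : L'
  toFun : {x : X // p x = src} → Y
  maps_to : ∀ x, q (toFun x) = rng
  continuous_toFun : Continuous toFun

def fiberCO {X L Y L' : Type} [TopologicalSpace X] [TopologicalSpace Y]
    (p : X → L) (q : Y → L') : TopologicalSpace (FiberMap p q) :=
  TopologicalSpace.generateFrom
    {W | ∃ (C : Set X) (O : Set Y), IsCompact C ∧ IsOpen O ∧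
      W = {θ : FiberMap p q | ∀ x : {x : X // p x = θ.src}, (x : X) ∈ C → θ.toFun x ∈ O}}

instance fiberMapTopology {X L Y L' : Type} [TopologicalSpace X] [TopologicalSpace Y]
    (p : X → L) (q : Y → L') : TopologicalSpace (FiberMap p q) :=
  fiberCO p q

set_option linter.unusedSectionVars false

section AA

variable {K L Y L' : Type} [UniformSpace K] [CompactSpace K] [T2Space K]
    [UniformSpace Y] [T2Space Y]
    [TopologicalSpace L] [CompactSpace L] [T2Space L]
    [TopologicalSpace L'] [CompactSpace L'] [T2Space L']
    (p : K → L) (q : Y → L')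

/-- The subbasic sets. -/
def Wset (C : Set K) (O : Set Y) : Set (FiberMap p q) :=
  {θ | ∀ x : {x : K // p x = θ.src}, (x : K) ∈ C → θ.toFun x ∈ O}

lemma isOpen_Wset {C : Set K} {O : Set Y} (hC : IsCompact C) (hO : IsOpen O) :
    IsOpen (Wset p q C O) :=
  TopologicalSpace.GenerateOpen.basic _ ⟨C, O, hC, hO, rfl⟩

lemma isCompact_fiber (hp : Continuous p) (l : L) : IsCompact {x : K | p x = l} :=
  (isClosed_eq hp continuous_const).isCompact

lemma compactSpace_fiber (hp : Continuous p) (l : L) : CompactSpace {x : K // p x = l} :=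
  isCompact_iff_compactSpace.mp (isCompact_fiber p hp l)

lemma continuous_src (hp : Continuous p) (hps : Function.Surjective p) :
    Continuous (fun θ : FiberMap p q => θ.src) := by
  rw [continuous_def]
  intro V hV
  have hset : (fun θ : FiberMap p q => θ.src) ⁻¹' V = Wset p q (p ⁻¹' Vᶜ) ∅ := by
    ext θ
    simp only [Set.mem_preimage, Wset, Set.mem_setOf_eq]
    constructor
    · intro h x hx
      rw [x.2] at hx
      exact absurd h hx
    · intro h
      by_contra hsrc
      obtain ⟨x, hx⟩ := hps θ.src
      exact (h ⟨x, hx⟩ (by simp only [Set.mem_preimage]; rw [hx]; exact hsrc)).elim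
  rw [hset]
  exact isOpen_Wset p q ((hV.isClosed_compl.preimage hp).isCompact) isOpen_empty

/-- Uniform continuity of a fiber map on its (compact) fiber. -/
lemma fiberMap_unifCont (hp : Continuous p) (θ : FiberMap p q) {U : Set (Y × Y)}
    (hU : U ∈ uniformity Y) :
    ∃ V ∈ uniformity K, ∀ x₁ x₂ : {x : K // p x = θ.src},
      ((x₁ : K), (x₂ : K)) ∈ V → (θ.toFun x₁, θ.toFun x₂) ∈ U := by
  haveI := compactSpace_fiber p hp θ.src
  have huc : UniformContinuous θ.toFun :=
    CompactSpace.uniformContinuous_of_continuous θ.continuous_toFun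
  rw [UniformContinuous, uniformity_subtype] at huc
  obtain ⟨V, hV, hVsub⟩ := Filter.mem_comap.mp (huc hU)
  exact ⟨V, hV, fun x₁ x₂ hx => hVsub (show ((x₁, x₂) : _ × _) ∈ _ ⁻¹' V from hx)⟩

/-- Lower semicontinuity of fibers (uses openness of `p`). -/
lemma fibers_lsc (hp : Continuous p) (hpo : IsOpenMap p) (l : L) {V : Set (K × K)}
    (hV : V ∈ uniformity K) :
    ∃ S ∈ 𝓝 l, ∀ l' ∈ S, ∀ x : K, p x = l → ∃ x', p x' = l' ∧ (x, x') ∈ V := by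
  obtain ⟨V₂, hV₂, hV₂s, hV₂c⟩ := comp_symm_mem_uniformity_sets hV
  obtain ⟨V₁, ⟨hV₁, hV₁o, hV₁s⟩, hV₁sub⟩ := uniformity_hasBasis_open_symmetric.mem_iff.mp hV₂
  have hfc := isCompact_fiber p hp l
  have hcover : {x : K | p x = l} ⊆ ⋃ x ∈ {x : K | p x = l}, UniformSpace.ball x V₁ :=
    fun x hx => Set.mem_biUnion hx (UniformSpace.mem_ball_self x hV₁)
  obtain ⟨t, hts, htfin, htcov⟩ := hfc.elim_finite_subcover_image
    (fun x _ => UniformSpace.isOpen_ball x hV₁o) hcover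
  by_cases hne : ({x : K | p x = l} : Set K).Nonempty
  · refine ⟨⋂ a ∈ t, p '' UniformSpace.ball a V₁, ?_, ?_⟩
    · refine (biInter_mem htfin).mpr (fun a ha => ?_)
      exact (hpo _ (UniformSpace.isOpen_ball a hV₁o)).mem_nhds
        ⟨a, UniformSpace.mem_ball_self a hV₁, hts ha⟩
    · intro l' hl' x hx
      obtain ⟨a, ha, hxa⟩ := Set.mem_iUnion₂.mp (htcov hx)
      obtain ⟨x', hx'b, hx'p⟩ := Set.mem_iInter₂.mp hl' a ha
      refine ⟨x', hx'p, hV₂c ⟨a, ?_, hV₁sub hx'b⟩⟩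
      exact hV₂s.symm _ _ (hV₁sub hxa)
  · refine ⟨Set.univ, univ_mem, ?_⟩
    intro l' _ x hx
    exact absurd ⟨x, hx⟩ hne

/-- If the fiber over `l` is inside an open set `G`, then nearby fibers are too. -/
lemma fibers_usc (hp : Continuous p) (l : L) {G : Set K} (hG : IsOpen G)
    (hfib : {x : K | p x = l} ⊆ G) :
    ∃ S ∈ 𝓝 l, ∀ l' ∈ S, ∀ x : K, p x = l' → x ∈ G := by
  have hKG : IsCompact (Gᶜ) := hG.isClosed_compl.isCompact
  have himg : IsClosed (p '' Gᶜ) := (hKG.image hp).isClosed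
  refine ⟨(p '' Gᶜ)ᶜ, himg.isOpen_compl.mem_nhds ?_, ?_⟩
  · intro ⟨x, hxG, hxl⟩
    exact hxG (hfib hxl)
  · intro l' hl' x hx
    by_contra hxG
    exact hl' ⟨x, hxG, hx⟩

end AA

section AA2
variable {K L Y L' : Type} [UniformSpace K] [CompactSpace K] [T2Space K]
    [UniformSpace Y] [T2Space Y]
    [TopologicalSpace L] [CompactSpace L] [T2Space L]
    [TopologicalSpace L'] [CompactSpace L'] [T2Space L']
    (p : K → L) (q : Y → L')

/-- Local equicontinuity neighborhood around any fiber map. -/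
lemma equic_local (hp : Continuous p) (hps : Function.Surjective p) (θ : FiberMap p q)
    {U : Set (Y × Y)} (hU : U ∈ uniformity Y) :
    ∃ N : Set (FiberMap p q), IsOpen N ∧ θ ∈ N ∧ ∃ V ∈ uniformity K, ∀ θ' ∈ N,
      ∀ x₁ x₂ : {x : K // p x = θ'.src}, ((x₁ : K), (x₂ : K)) ∈ V →
        (θ'.toFun x₁, θ'.toFun x₂) ∈ U := by
  classical
  obtain ⟨x₀, hx₀⟩ := hps θ.src
  haveI : Inhabited Y := ⟨θ.toFun ⟨x₀, hx₀⟩⟩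
  obtain ⟨U₂, hU₂, hU₂s, hU₂c⟩ := comp_symm_mem_uniformity_sets hU
  obtain ⟨U₁, ⟨hU₁, hU₁o, hU₁s⟩, hU₁sub⟩ := uniformity_hasBasis_open_symmetric.mem_iff.mp hU₂
  obtain ⟨V₀, hV₀, hV₀p⟩ := fiberMap_unifCont p q hp θ hU₁
  obtain ⟨V₂, hV₂, hV₂s, hV₂c⟩ := comp_comp_symm_mem_uniformity_sets hV₀
  obtain ⟨V₁, ⟨hV₁, hV₁o, hV₁s⟩, hV₁sub⟩ := uniformity_hasBasis_open_symmetric.mem_iff.mp hV₂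
  have hV₁V₀ : (V₁ ○ V₁) ○ V₁ ⊆ V₀ := fun z hz => hV₂c
    (SetRel.comp_subset_comp (SetRel.comp_subset_comp hV₁sub hV₁sub) hV₁sub hz)
  set y : K → Y := fun a => if h : p a = θ.src then θ.toFun ⟨a, h⟩ else default with hy
  set W : K → Set (FiberMap p q) := fun a =>
    Wset p q (closure (UniformSpace.ball a (V₁ ○ V₁))) (UniformSpace.ball (y a) U₁) with hW
  have hWopen : ∀ a, IsOpen (W a) := fun a =>
    isOpen_Wset p q isClosed_closure.isCompact (UniformSpace.isOpen_ball _ hU₁o)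
  have hcover : {x : K | p x = θ.src} ⊆ ⋃ x ∈ {x : K | p x = θ.src}, UniformSpace.ball x V₁ :=
    fun x hx => Set.mem_biUnion hx (UniformSpace.mem_ball_self x hV₁)
  obtain ⟨t, hts, htfin, htcov⟩ := (isCompact_fiber p hp θ.src).elim_finite_subcover_image
    (fun x _ => UniformSpace.isOpen_ball x hV₁o) hcover
  have hGopen : IsOpen (⋃ a ∈ t, UniformSpace.ball a V₁) :=
    isOpen_biUnion (fun a _ => UniformSpace.isOpen_ball a hV₁o)
  obtain ⟨S, hS, hSp⟩ := fibers_usc p hp θ.src hGopen htcov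
  obtain ⟨S', hS'sub, hS'o, hS'mem⟩ := mem_nhds_iff.mp hS
  refine ⟨(⋂ a ∈ t, W a) ∩ ((fun θ' : FiberMap p q => θ'.src) ⁻¹' S'),
    (htfin.isOpen_biInter (fun a _ => hWopen a)).inter
      (hS'o.preimage (continuous_src p q hp hps)), ⟨?_, hS'mem⟩, V₁, hV₁, ?_⟩
  · refine Set.mem_iInter₂.mpr (fun a ha => ?_)
    intro x hx
    have hax : (a, (x : K)) ∈ (V₁ ○ V₁) ○ V₁ := by
      obtain ⟨z, hz1, hz2⟩ := (UniformSpace.mem_closure_iff_ball.mp hx) hV₁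
      exact ⟨z, hz2, hV₁s.symm _ _ hz1⟩
    have hya : y a = θ.toFun ⟨a, hts ha⟩ := dif_pos (hts ha)
    have : (θ.toFun ⟨a, hts ha⟩, θ.toFun x) ∈ U₁ := hV₀p ⟨a, hts ha⟩ x (hV₁V₀ hax)
    show (y a, θ.toFun x) ∈ U₁
    rw [hya]
    exact this
  · rintro θ' ⟨hθ'W, hθ'S⟩ x₁ x₂ hx
    have hx₁G : (x₁ : K) ∈ ⋃ a ∈ t, UniformSpace.ball a V₁ :=
      hSp θ'.src (hS'sub hθ'S) (x₁ : K) x₁.2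
    obtain ⟨a, ha, hx₁b⟩ := Set.mem_iUnion₂.mp hx₁G
    have hWa := Set.mem_iInter₂.mp hθ'W a ha
    have h1 : θ'.toFun x₁ ∈ UniformSpace.ball (y a) U₁ :=
      hWa x₁ (subset_closure ⟨(x₁ : K), hx₁b, refl_mem_uniformity hV₁⟩)
    have h2 : θ'.toFun x₂ ∈ UniformSpace.ball (y a) U₁ :=
      hWa x₂ (subset_closure ⟨(x₁ : K), hx₁b, hx⟩)
    exact hU₂c ⟨y a, hU₁sub (hU₁s.symm _ _ h1), hU₁sub h2⟩

/-- Forward direction, equicontinuity. -/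
lemma forward_equic (hp : Continuous p) (hps : Function.Surjective p)
    {F : Set (FiberMap p q)} (hF : IsCompact (closure F))
    {U : Set (Y × Y)} (hU : U ∈ uniformity Y) :
    ∃ V ∈ uniformity K, ∀ θ ∈ F, ∀ x₁ x₂ : {x : K // p x = θ.src},
      ((x₁ : K), (x₂ : K)) ∈ V → (θ.toFun x₁, θ.toFun x₂) ∈ U := by
  have hloc := fun θ : FiberMap p q => equic_local p q hp hps θ hU
  choose N hNo hNmem V hV hVp using hloc
  obtain ⟨t, htcov⟩ := hF.elim_finite_subcover N hNo (fun θ hθ => Set.mem_iUnion.mpr ⟨θ, hNmem θ⟩)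
  refine ⟨⋂ θ ∈ t, V θ, (biInter_mem t.finite_toSet).mpr (fun θ _ => hV θ), ?_⟩
  intro θ hθ x₁ x₂ hx
  obtain ⟨θ₀, hθ₀t, hθN⟩ := Set.mem_iUnion₂.mp (htcov (subset_closure hθ))
  exact hVp θ₀ θ hθN x₁ x₂ (Set.mem_iInter₂.mp hx θ₀ hθ₀t)

/-- Forward direction, compactness of the total image. -/
lemma forward_image (hp : Continuous p) (hps : Function.Surjective p)
    {F : Set (FiberMap p q)} (hF : IsCompact (closure F)) :
    IsCompact (closure (⋃ θ ∈ F, Set.range θ.toFun)) := by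
  classical
  rcases F.eq_empty_or_nonempty with rfl | ⟨θ₀, hθ₀⟩
  · simp
  obtain ⟨x₀, hx₀⟩ := hps θ₀.src
  haveI : Inhabited Y := ⟨θ₀.toFun ⟨x₀, hx₀⟩⟩
  set ev : FiberMap p q × K → Y :=
    fun z => if h : p z.2 = z.1.src then z.1.toFun ⟨z.2, h⟩ else default with hev
  set S : Set (FiberMap p q × K) := (closure F ×ˢ (Set.univ : Set K)) ∩
    {z | p z.2 = z.1.src} with hSdef
  have hSc : IsCompact S := (hF.prod isCompact_univ).inter_right
    (isClosed_eq (hp.comp continuous_snd) ((continuous_src p q hp hps).comp continuous_fst))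
  have hevc : ContinuousOn ev S := by
    rintro ⟨θ, x⟩ hz
    have hpx : p x = θ.src := hz.2
    have hval : ev (θ, x) = θ.toFun ⟨x, hpx⟩ := by rw [hev]; exact dif_pos hpx
    rw [ContinuousWithinAt, hval, tendsto_nhds]
    intro O hO hvO
    have hpre : IsOpen (θ.toFun ⁻¹' O) := hO.preimage θ.continuous_toFun
    obtain ⟨G, hGo, hGeq⟩ := isOpen_induced_iff.mp hpre
    have hxG : x ∈ G := by
      have hmem : (⟨x, hpx⟩ : {x : K // p x = θ.src}) ∈ Subtype.val ⁻¹' G := by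
        rw [hGeq]; exact hvO
      exact hmem
    obtain ⟨C, hCc, hxC, hCG⟩ := exists_compact_subset hGo hxG
    have hWmem : θ ∈ Wset p q C O := by
      intro x'' hx''C
      have h2 : x'' ∈ Subtype.val ⁻¹' G := hCG hx''C
      rw [hGeq] at h2
      exact h2
    refine mem_nhdsWithin.mpr ⟨Wset p q C O ×ˢ interior C,
      (isOpen_Wset p q hCc hO).prod isOpen_interior, ⟨hWmem, hxC⟩, ?_⟩
    rintro ⟨θ', x'⟩ ⟨⟨hθ'W, hx'⟩, hz2⟩
    have hpx' : p x' = θ'.src := hz2.2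
    rw [Set.mem_preimage, hev]
    simp only
    rw [dif_pos hpx']
    exact hθ'W ⟨x', hpx'⟩ (interior_subset hx')
  have himg : IsCompact (ev '' S) := hSc.image_of_continuousOn hevc
  refine IsCompact.of_isClosed_subset himg isClosed_closure (closure_minimal ?_ himg.isClosed)
  intro y hy
  simp only [Set.mem_iUnion, Set.mem_range] at hy
  obtain ⟨θ, hθ, x, rfl⟩ := hy
  refine ⟨(θ, (x : K)), ⟨⟨subset_closure hθ, trivial⟩, x.2⟩, ?_⟩
  rw [hev]
  exact dif_pos x.2

end AA2

section AA3
variable {K L Y L' : Type} [UniformSpace K] [CompactSpace K] [T2Space K]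
    [UniformSpace Y] [T2Space Y]
    [TopologicalSpace L] [CompactSpace L] [T2Space L]
    [TopologicalSpace L'] [CompactSpace L'] [T2Space L']
    (p : K → L) (q : Y → L')

/-- To converge to `θs` it suffices to contain all subbasic open sets around it. -/
lemma le_nhds_of_subbasic {θs : FiberMap p q} {f : Filter (FiberMap p q)}
    (h : ∀ C : Set K, ∀ O : Set Y, IsCompact C → IsOpen O → θs ∈ Wset p q C O →
      Wset p q C O ∈ f) : f ≤ 𝓝 θs := by
  have heq : (𝓝 θs : Filter (FiberMap p q)) =
      @nhds _ (TopologicalSpace.generateFrom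
        {W | ∃ (C : Set K) (O : Set Y), IsCompact C ∧ IsOpen O ∧
          W = {θ : FiberMap p q | ∀ x : {x : K // p x = θ.src},
            (x : K) ∈ C → θ.toFun x ∈ O}}) θs := rfl
  rw [heq, TopologicalSpace.nhds_generateFrom]
  refine le_iInf₂ (fun s hs => ?_)
  obtain ⟨hθs, C, O, hC, hO, rfl⟩ := hs
  exact le_principal_iff.mpr (h C O hC hO hθs)

/-- Ranges of members of the closure stay inside any closed common range bound. -/
lemma closure_range_subset (hp : Continuous p) (hps : Function.Surjective p)
    (hpo : IsOpenMap p) {F : Set (FiberMap p q)} {Q : Set Y} (hQcl : IsClosed Q)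
    (hQ : ∀ θ ∈ F, Set.range θ.toFun ⊆ Q) :
    ∀ θ' ∈ closure F, Set.range θ'.toFun ⊆ Q := by
  rintro θ' hθ' y ⟨x, rfl⟩
  by_contra hyQ
  have hO : IsOpen Qᶜ := hQcl.isOpen_compl
  have hpre : IsOpen (θ'.toFun ⁻¹' Qᶜ) := hO.preimage θ'.continuous_toFun
  obtain ⟨G, hGo, hGeq⟩ := isOpen_induced_iff.mp hpre
  have hxG : (x : K) ∈ G := by
    have hmem : x ∈ Subtype.val ⁻¹' G := by rw [hGeq]; exact hyQ
    exact hmem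
  obtain ⟨C, hCc, hxC, hCG⟩ := exists_compact_subset hGo hxG
  set N : Set (FiberMap p q) := Wset p q C Qᶜ ∩
    ((fun θ : FiberMap p q => θ.src) ⁻¹' (p '' interior C)) with hN
  have hNo : IsOpen N := (isOpen_Wset p q hCc hO).inter
    ((hpo _ isOpen_interior).preimage (continuous_src p q hp hps))
  have hθ'N : θ' ∈ N := by
    constructor
    · intro x'' hx''
      have h2 : x'' ∈ Subtype.val ⁻¹' G := hCG hx''
      rw [hGeq] at h2
      exact h2
    · exact ⟨(x : K), hxC, x.2⟩
  obtain ⟨θ, hθN, hθF⟩ := _root_.mem_closure_iff.mp hθ' N hNo hθ'N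
  obtain ⟨x', hx'C, hx'p⟩ := hθN.2
  exact hθN.1 ⟨x', hx'p⟩ (interior_subset hx'C) (hQ θ hθF ⟨⟨x', hx'p⟩, rfl⟩)

/-- Equicontinuity passes to the closure (uses openness of `p`). -/
lemma equic_closure (hp : Continuous p) (hps : Function.Surjective p)
    (hpo : IsOpenMap p) {F : Set (FiberMap p q)}
    (hE : ∀ U ∈ uniformity Y, ∃ V ∈ uniformity K, ∀ θ ∈ F,
      ∀ x₁ x₂ : {x : K // p x = θ.src},
        ((x₁ : K), (x₂ : K)) ∈ V → (θ.toFun x₁, θ.toFun x₂) ∈ U) :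
    ∀ U ∈ uniformity Y, ∃ V ∈ uniformity K, ∀ θ ∈ closure F,
      ∀ x₁ x₂ : {x : K // p x = θ.src},
        ((x₁ : K), (x₂ : K)) ∈ V → (θ.toFun x₁, θ.toFun x₂) ∈ U := by
  intro U hU
  obtain ⟨U₀, ⟨hU₀, hU₀cl⟩, hU₀sub⟩ := uniformity_hasBasis_closed.mem_iff.mp hU
  obtain ⟨V, hV, hVp⟩ := hE U₀ hU₀
  obtain ⟨V', ⟨hV', hV'o⟩, hV'sub⟩ := uniformity_hasBasis_open.mem_iff.mp hV
  refine ⟨V', hV', ?_⟩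
  intro θ' hθ' x₁ x₂ h12
  by_contra hnot
  have hnotU₀ : (θ'.toFun x₁, θ'.toFun x₂) ∈ (U₀ᶜ : Set (Y × Y)) := by
    intro hmem
    exact hnot (hU₀sub hmem)
  obtain ⟨O₁, O₂, hO₁, hO₂, hmO₁, hmO₂, hOsub⟩ :=
    isOpen_prod_iff.mp hU₀cl.isOpen_compl _ _ hnotU₀
  obtain ⟨A₁, A₂, hA₁, hA₂, hmA₁, hmA₂, hAsub⟩ := isOpen_prod_iff.mp hV'o _ _ h12
  -- continuity of θ' at x₁ and x₂
  obtain ⟨G₁, hG₁o, hG₁eq⟩ := isOpen_induced_iff.mp (hO₁.preimage θ'.continuous_toFun)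
  obtain ⟨G₂, hG₂o, hG₂eq⟩ := isOpen_induced_iff.mp (hO₂.preimage θ'.continuous_toFun)
  have hxG₁ : (x₁ : K) ∈ G₁ ∩ A₁ := by
    refine ⟨?_, hmA₁⟩
    have hmem : x₁ ∈ Subtype.val ⁻¹' G₁ := by rw [hG₁eq]; exact hmO₁
    exact hmem
  have hxG₂ : (x₂ : K) ∈ G₂ ∩ A₂ := by
    refine ⟨?_, hmA₂⟩
    have hmem : x₂ ∈ Subtype.val ⁻¹' G₂ := by rw [hG₂eq]; exact hmO₂
    exact hmem
  obtain ⟨C₁, hC₁c, hxC₁, hC₁sub⟩ := exists_compact_subset (hG₁o.inter hA₁) hxG₁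
  obtain ⟨C₂, hC₂c, hxC₂, hC₂sub⟩ := exists_compact_subset (hG₂o.inter hA₂) hxG₂
  set N : Set (FiberMap p q) := (Wset p q C₁ O₁ ∩ Wset p q C₂ O₂) ∩
    ((fun θ : FiberMap p q => θ.src) ⁻¹' (p '' interior C₁ ∩ p '' interior C₂)) with hN
  have hNo : IsOpen N := ((isOpen_Wset p q hC₁c hO₁).inter (isOpen_Wset p q hC₂c hO₂)).inter
    ((((hpo _ isOpen_interior).inter (hpo _ isOpen_interior))).preimage
      (continuous_src p q hp hps))
  have hθ'N : θ' ∈ N := by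
    refine ⟨⟨?_, ?_⟩, ⟨(x₁ : K), hxC₁, x₁.2⟩, ⟨(x₂ : K), hxC₂, x₂.2⟩⟩
    · intro x'' hx''
      have h2 : x'' ∈ Subtype.val ⁻¹' G₁ := (hC₁sub hx'').1
      rw [hG₁eq] at h2
      exact h2
    · intro x'' hx''
      have h2 : x'' ∈ Subtype.val ⁻¹' G₂ := (hC₂sub hx'').1
      rw [hG₂eq] at h2
      exact h2
  obtain ⟨θ, hθN, hθF⟩ := _root_.mem_closure_iff.mp hθ' N hNo hθ'N
  obtain ⟨⟨hθW₁, hθW₂⟩, hsrc⟩ := hθN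
  obtain ⟨⟨x₁', hx₁'C, hx₁'p⟩, ⟨x₂', hx₂'C, hx₂'p⟩⟩ := hsrc
  have hx'V : (x₁', x₂') ∈ V := hV'sub (hAsub
    ⟨(hC₁sub (interior_subset hx₁'C)).2, (hC₂sub (interior_subset hx₂'C)).2⟩)
  have hin : (θ.toFun ⟨x₁', hx₁'p⟩, θ.toFun ⟨x₂', hx₂'p⟩) ∈ U₀ :=
    hVp θ hθF ⟨x₁', hx₁'p⟩ ⟨x₂', hx₂'p⟩ hx'V
  have h1 : θ.toFun ⟨x₁', hx₁'p⟩ ∈ O₁ := hθW₁ ⟨x₁', hx₁'p⟩ (interior_subset hx₁'C)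
  have h2 : θ.toFun ⟨x₂', hx₂'p⟩ ∈ O₂ := hθW₂ ⟨x₂', hx₂'p⟩ (interior_subset hx₂'C)
  exact hOsub ⟨h1, h2⟩ hin

end AA3

section AA4
variable {K L Y L' : Type} [UniformSpace K] [CompactSpace K] [T2Space K]
    [UniformSpace Y] [T2Space Y]
    [TopologicalSpace L] [CompactSpace L] [T2Space L]
    [TopologicalSpace L'] [CompactSpace L'] [T2Space L']
    (p : K → L) (q : Y → L')

lemma backward_dir (hp : Continuous p) (hps : Function.Surjective p) (hpo : IsOpenMap p)
    (hq : Continuous q)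
    {F : Set (FiberMap p q)}
    (hQc : IsCompact (closure (⋃ θ ∈ F, Set.range θ.toFun)))
    (hE : ∀ U ∈ uniformity Y, ∃ V ∈ uniformity K, ∀ θ ∈ F,
      ∀ x₁ x₂ : {x : K // p x = θ.src},
        ((x₁ : K), (x₂ : K)) ∈ V → (θ.toFun x₁, θ.toFun x₂) ∈ U) :
    IsCompact (closure F) := by
  classical
  set Q : Set Y := closure (⋃ θ ∈ F, Set.range θ.toFun) with hQdef
  have hQcl : IsClosed Q := isClosed_closure
  have hQr : ∀ θ ∈ F, Set.range θ.toFun ⊆ Q := by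
    intro θ hθ y hy
    exact subset_closure (Set.mem_biUnion hθ hy)
  have hQr' : ∀ θ' ∈ closure F, Set.range θ'.toFun ⊆ Q :=
    closure_range_subset p q hp hps hpo hQcl hQr
  have hEc := equic_closure p q hp hps hpo hE
  rw [isCompact_iff_ultrafilter_le_nhds]
  intro G hG
  have hFG : closure F ∈ G := le_principal_iff.mp hG
  obtain ⟨θ₀, hθ₀⟩ := G.nonempty_of_mem hFG
  obtain ⟨x₀, hx₀⟩ := hps θ₀.src
  haveI : Inhabited Y := ⟨θ₀.toFun ⟨x₀, hx₀⟩⟩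
  haveI : Inhabited K := ⟨x₀⟩
  -- limits of src and rng
  obtain ⟨lstar, -, hlstar⟩ := isCompact_univ.ultrafilter_le_nhds
    (G.map (fun θ : FiberMap p q => θ.src)) (le_principal_iff.mpr univ_mem)
  obtain ⟨rstar, -, hrstar⟩ := isCompact_univ.ultrafilter_le_nhds
    (G.map (fun θ : FiberMap p q => θ.rng)) (le_principal_iff.mpr univ_mem)
  have hsrcG : ∀ S ∈ 𝓝 lstar, ((fun θ : FiberMap p q => θ.src) ⁻¹' S) ∈ G := by
    intro S hS
    exact Filter.mem_map.mp (hlstar hS)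
  have hrngG : ∀ S ∈ 𝓝 rstar, ((fun θ : FiberMap p q => θ.rng) ⁻¹' S) ∈ G := by
    intro S hS
    exact Filter.mem_map.mp (hrstar hS)
  -- the approximate-evaluation sets
  set E : Set (FiberMap p q) → Set (K × K) → K → Set Y := fun A V x =>
    {z : Y | ∃ θ, (θ ∈ A ∧ θ ∈ closure F) ∧ ∃ x' : {w : K // p w = θ.src},
      (x, (x' : K)) ∈ V ∧ θ.toFun x' = z} with hEdef
  have hEQ : ∀ A V x, E A V x ⊆ Q := by
    rintro A V x z ⟨θ, ⟨hA, hF'⟩, x', hV, rfl⟩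
    exact hQr' θ hF' ⟨x', rfl⟩
  have hEne : ∀ A ∈ G, ∀ V ∈ uniformity K, ∀ x : K, p x = lstar → (E A V x).Nonempty := by
    intro A hA V hV x hx
    obtain ⟨S, hS, hSp⟩ := fibers_lsc p hp hpo lstar hV
    have hmem : A ∩ closure F ∩ ((fun θ : FiberMap p q => θ.src) ⁻¹' S) ∈ G :=
      inter_mem (inter_mem hA hFG) (hsrcG S hS)
    obtain ⟨θ, ⟨hθA, hθF⟩, hθS⟩ := G.nonempty_of_mem hmem
    obtain ⟨x', hx'p, hx'V⟩ := hSp θ.src hθS x hx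
    exact ⟨θ.toFun ⟨x', hx'p⟩, θ, ⟨hθA, hθF⟩, ⟨x', hx'p⟩, hx'V, rfl⟩
  -- choose a limit value over each point of the fiber of lstar
  have hT : ∀ x : {x : K // p x = lstar}, ∃ y : Y, ∀ A ∈ G, ∀ V ∈ uniformity K,
      y ∈ closure (E A V (x : K)) := by
    intro x
    set ι := {AV : Set (FiberMap p q) × Set (K × K) // AV.1 ∈ G ∧ AV.2 ∈ uniformity K}
    haveI : Nonempty ι := ⟨⟨(Set.univ, Set.univ), univ_mem, univ_mem⟩⟩
    set Z : ι → Set Y := fun i => closure (E i.1.1 i.1.2 (x : K)) with hZdef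
    have hZcl : ∀ i, IsClosed (Z i) := fun i => isClosed_closure
    have hZc : ∀ i : ι, IsCompact (Z i) := fun i =>
      hQc.of_isClosed_subset isClosed_closure (closure_minimal (hEQ _ _ _) hQcl)
    have hZn : ∀ i : ι, (Z i).Nonempty := fun i =>
      (hEne i.1.1 i.2.1 i.1.2 i.2.2 (x : K) x.2).mono subset_closure
    have hZd : Directed (· ⊇ ·) Z := by
      rintro i j
      refine ⟨⟨(i.1.1 ∩ j.1.1, i.1.2 ∩ j.1.2), inter_mem i.2.1 j.2.1,
        inter_mem i.2.2 j.2.2⟩, ?_, ?_⟩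
      · refine closure_mono ?_
        rintro z ⟨θ, ⟨⟨hA, _⟩, hF'⟩, x', hV, rfl⟩
        exact ⟨θ, ⟨hA, hF'⟩, x', hV.1, rfl⟩
      · refine closure_mono ?_
        rintro z ⟨θ, ⟨⟨_, hA⟩, hF'⟩, x', hV, rfl⟩
        exact ⟨θ, ⟨hA, hF'⟩, x', hV.2, rfl⟩
    obtain ⟨y, hy⟩ := IsCompact.nonempty_iInter_of_directed_nonempty_isCompact_isClosed
      Z hZd hZn hZc hZcl
    refine ⟨y, fun A hA V hV => ?_⟩
    exact Set.mem_iInter.mp hy ⟨(A, V), hA, hV⟩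
  choose f hf using hT
  -- key approximation property of `f`
  have hdag : ∀ x : {x : K // p x = lstar}, ∀ V ∈ uniformity K, ∀ U ∈ uniformity Y,
      {θ : FiberMap p q | θ ∈ closure F ∧ ∃ x' : {w : K // p w = θ.src},
        ((x : K), (x' : K)) ∈ V ∧ (f x, θ.toFun x') ∈ U} ∈ G := by
    intro x V hV U hU
    by_contra hB
    have hBc : {θ : FiberMap p q | θ ∈ closure F ∧ ∃ x' : {w : K // p w = θ.src},
        ((x : K), (x' : K)) ∈ V ∧ (f x, θ.toFun x') ∈ U}ᶜ ∈ G :=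
      (Ultrafilter.compl_mem_iff_notMem).mpr hB
    have hcl := hf x _ hBc V hV
    obtain ⟨z, hzb, hzE⟩ := UniformSpace.mem_closure_iff_ball.mp hcl hU
    obtain ⟨θ, ⟨hθBc, hθF⟩, x', hx'V, rfl⟩ := hzE
    exact hθBc ⟨hθF, x', hx'V, hzb⟩
  -- uniform equicontinuity of `f`
  have hfE : ∀ U ∈ uniformity Y, ∃ V₁ ∈ uniformity K, ∀ x₁ x₂ : {x : K // p x = lstar},
      ((x₁ : K), (x₂ : K)) ∈ V₁ → (f x₁, f x₂) ∈ U := by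
    intro U hU
    obtain ⟨U₀, hU₀, hU₀s, hU₀c⟩ := comp_comp_symm_mem_uniformity_sets hU
    obtain ⟨V, hV, hVp⟩ := hEc U₀ hU₀
    obtain ⟨V₁, hV₁, hV₁s, hV₁c⟩ := comp_comp_symm_mem_uniformity_sets hV
    refine ⟨V₁, hV₁, fun x₁ x₂ h12 => ?_⟩
    have hB := inter_mem (hdag x₁ V₁ hV₁ U₀ hU₀) (hdag x₂ V₁ hV₁ U₀ hU₀)
    obtain ⟨θ, ⟨hθF, x₁', h₁V, h₁U⟩, ⟨-, x₂', h₂V, h₂U⟩⟩ := G.nonempty_of_mem hB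
    have hx' : ((x₁' : K), (x₂' : K)) ∈ V :=
      hV₁c ⟨(x₂ : K), ⟨(x₁ : K), hV₁s.symm _ _ h₁V, h12⟩, h₂V⟩
    have hmid := hVp θ hθF x₁' x₂' hx'
    exact hU₀c ⟨θ.toFun x₂', ⟨θ.toFun x₁', h₁U, hmid⟩, hU₀s.symm _ _ h₂U⟩
  -- continuity of `f`
  have hfc : Continuous f := by
    rw [continuous_iff_continuousAt]
    intro x s hs
    obtain ⟨U, hU, hUb⟩ := UniformSpace.mem_nhds_iff.mp hs
    obtain ⟨V₁, hV₁, hV₁p⟩ := hfE U hU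
    have hball : Subtype.val ⁻¹' (UniformSpace.ball (x : K) V₁) ∈ 𝓝 x := by
      rw [nhds_subtype_eq_comap]
      exact Filter.preimage_mem_comap (UniformSpace.ball_mem_nhds _ hV₁)
    rw [Filter.mem_map]
    refine Filter.mem_of_superset hball ?_
    intro x₂ hx₂
    exact hUb (hV₁p x x₂ hx₂)
  -- `f` maps into the fiber over `rstar`
  have hfq : ∀ x, q (f x) = rstar := by
    intro x
    by_contra hne
    obtain ⟨u, v, hu, hv, hru, hqv, huv⟩ := t2_separation (Ne.symm hne)
    obtain ⟨S, ⟨hSn, hScl⟩, hSu⟩ := (closed_nhds_basis rstar).mem_iff.mp (hu.mem_nhds hru)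
    have hA : ((fun θ : FiberMap p q => θ.rng) ⁻¹' S) ∈ G := hrngG S hSn
    have hclo := hf x _ hA Set.univ univ_mem
    have hmt : Set.MapsTo q (E ((fun θ : FiberMap p q => θ.rng) ⁻¹' S) Set.univ (x : K)) S := by
      rintro z ⟨θ, ⟨hθA, hθF⟩, x', hx'V, rfl⟩
      rw [θ.maps_to x']
      exact hθA
    have hmem : q (f x) ∈ closure S := map_mem_closure hq hclo hmt
    rw [hScl.closure_eq] at hmem
    exact Set.disjoint_left.mp huv (hSu hmem) hqv
  -- the convergence
  have hsrct : Filter.Tendsto (fun θ : FiberMap p q => θ.src) ↑G (𝓝 lstar) := by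
    rw [Filter.Tendsto]
    rwa [← Ultrafilter.coe_map]
  have hconv : ↑G ≤ 𝓝 (⟨lstar, rstar, f, hfq, hfc⟩ : FiberMap p q) := by
    refine le_nhds_of_subbasic p q ?_
    intro C O hC hO hθsW
    by_contra hW
    have hD : (Wset p q C O)ᶜ ∈ G := (Ultrafilter.compl_mem_iff_notMem).mpr hW
    have hwit : ∀ θ : FiberMap p q, θ ∈ (Wset p q C O)ᶜ → ∃ x' : {w : K // p w = θ.src},
        (x' : K) ∈ C ∧ θ.toFun x' ∉ O := by
      intro θ hθ
      simp only [Wset, Set.mem_compl_iff, Set.mem_setOf_eq] at hθ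
      push_neg at hθ
      exact hθ
    set g : FiberMap p q → K × Y := fun θ =>
      if h : ∃ x' : {w : K // p w = θ.src}, (x' : K) ∈ C ∧ θ.toFun x' ∉ O then
        ((h.choose : K), θ.toFun h.choose) else (default, default) with hgdef
    have hgC : ∀ θ, θ ∈ (Wset p q C O)ᶜ ∩ closure F → ∃ x' : {w : K // p w = θ.src},
        g θ = ((x' : K), θ.toFun x') ∧ (x' : K) ∈ C ∧ θ.toFun x' ∉ O ∧ θ.toFun x' ∈ Q := by
      rintro θ ⟨hθD, hθF⟩
      have hex : ∃ x' : {w : K // p w = θ.src}, (x' : K) ∈ C ∧ θ.toFun x' ∉ O := hwit θ hθD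
      refine ⟨hex.choose, ?_, hex.choose_spec.1, hex.choose_spec.2, hQr' θ hθF ⟨hex.choose, rfl⟩⟩
      rw [hgdef]
      simp only [dif_pos hex]
    have hgQ : ↑(G.map g) ≤ Filter.principal (C ×ˢ Q) := by
      rw [Ultrafilter.coe_map]
      refine le_principal_iff.mpr (Filter.mem_map.mpr ?_)
      refine Filter.mem_of_superset (inter_mem hD hFG) ?_
      intro θ hθ
      obtain ⟨x', hgθ, hx'C, hx'O, hx'Q⟩ := hgC θ hθ
      show g θ ∈ C ×ˢ Q
      rw [hgθ]
      exact ⟨hx'C, hx'Q⟩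
    obtain ⟨⟨xinf, yinf⟩, hzmem, hzlim⟩ := (hC.prod hQc).ultrafilter_le_nhds (G.map g) hgQ
    have hgt : Filter.Tendsto g ↑G (𝓝 (xinf, yinf)) := by
      rw [Filter.Tendsto]
      rwa [← Ultrafilter.coe_map]
    have htend1 : Filter.Tendsto (fun θ => (g θ).1) ↑G (𝓝 xinf) :=
      (continuous_fst.tendsto _).comp hgt
    have htend2 : Filter.Tendsto (fun θ => (g θ).2) ↑G (𝓝 yinf) :=
      (continuous_snd.tendsto _).comp hgt
    have htendp : Filter.Tendsto (fun θ : FiberMap p q => p (g θ).1) ↑G (𝓝 (p xinf)) :=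
      (hp.tendsto xinf).comp htend1
    have hsrceq : (fun θ : FiberMap p q => p (g θ).1) =ᶠ[↑G]
        (fun θ : FiberMap p q => θ.src) := by
      filter_upwards [inter_mem hD hFG] with θ hθ
      obtain ⟨x', hgθ, -, -, -⟩ := hgC θ hθ
      rw [hgθ]
      exact x'.2
    have hpxinf : p xinf = lstar :=
      tendsto_nhds_unique (htendp.congr' hsrceq) hsrct
    have hyinfO : yinf ∉ O := by
      have hyc : yinf ∈ (Oᶜ : Set Y) := by
        refine hO.isClosed_compl.mem_of_tendsto htend2 ?_
        filter_upwards [inter_mem hD hFG] with θ hθ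
        obtain ⟨x', hgθ, -, hx'O, -⟩ := hgC θ hθ
        rw [hgθ]
        exact hx'O
      exact hyc
    have hfxO : f ⟨xinf, hpxinf⟩ ∈ O := hθsW ⟨xinf, hpxinf⟩ hzmem.1
    have hyeq : f ⟨xinf, hpxinf⟩ = yinf := by
      refine eq_of_uniformity (fun {U} hU => ?_)
      obtain ⟨U₀, hU₀, hU₀s, hU₀c⟩ := comp_comp_symm_mem_uniformity_sets hU
      obtain ⟨V, hV, hVp⟩ := hEc U₀ hU₀
      obtain ⟨V₁, hV₁, hV₁s, hV₁c⟩ := comp_symm_mem_uniformity_sets hV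
      have hA1 := hdag ⟨xinf, hpxinf⟩ V₁ hV₁ U₀ hU₀
      have hA2 : {θ : FiberMap p q | (g θ).1 ∈ UniformSpace.ball xinf V₁} ∈ G :=
        Filter.mem_map.mp (htend1 (UniformSpace.ball_mem_nhds _ hV₁))
      have hA3 : {θ : FiberMap p q | (g θ).2 ∈ UniformSpace.ball yinf U₀} ∈ G :=
        Filter.mem_map.mp (htend2 (UniformSpace.ball_mem_nhds _ hU₀))
      have hbig := inter_mem (inter_mem hA1 hA2) (inter_mem hA3 (inter_mem hD hFG))
      obtain ⟨θ, ⟨⟨hθF, x₁', h₁V, h₁U⟩, hθ2⟩, hθ3, hθDF⟩ := G.nonempty_of_mem hbig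
      obtain ⟨x', hgθ, hx'C, hx'O, hx'Q⟩ := hgC θ hθDF
      simp only [Set.mem_setOf_eq] at hθ2 hθ3
      rw [hgθ] at hθ2 hθ3
      have hx'V : ((x₁' : K), (x' : K)) ∈ V :=
        hV₁c ⟨xinf, hV₁s.symm _ _ h₁V, hθ2⟩
      have hmid := hVp θ hθF x₁' x' hx'V
      exact hU₀c ⟨θ.toFun x', ⟨θ.toFun x₁', h₁U, hmid⟩, hU₀s.symm _ _ hθ3⟩
    rw [hyeq] at hfxO
    exact hyinfO hfxO
  refine ⟨⟨lstar, rstar, f, hfq, hfc⟩, ?_, hconv⟩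
  have hmem : (⟨lstar, rstar, f, hfq, hfc⟩ : FiberMap p q) ∈ closure (closure F) := by
    rw [mem_closure_iff_nhds]
    intro t ht
    exact G.nonempty_of_mem (inter_mem (hconv ht) hFG)
  rwa [closure_closure] at hmem

end AA4


/-- Arzelà–Ascoli theorem for fiber maps: for `p : K → L` open with `K` compact Hausdorff
and `Y` a Hausdorff uniform space, a set `F ⊆ C_p^q(K,Y)` has compact closure in the
compact-open topology iff its total image has compact closure in `Y` and `F` is
uniformly equicontinuous. -/
theorem statement3 {K L Y L' : Type} [UniformSpace K] [CompactSpace K] [T2Space K]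
    [UniformSpace Y] [T2Space Y]
    [TopologicalSpace L] [CompactSpace L] [T2Space L]
    [TopologicalSpace L'] [CompactSpace L'] [T2Space L']
    (p : K → L) (q : Y → L') (hp : Continuous p) (hps : Function.Surjective p)
    (hpo : IsOpenMap p) (hq : Continuous q) (hqs : Function.Surjective q)
    (F : Set (FiberMap p q)) :
    IsCompact (closure F) ↔
      (IsCompact (closure (⋃ θ ∈ F, Set.range θ.toFun)) ∧
       ∀ U ∈ uniformity Y, ∃ V ∈ uniformity K, ∀ θ ∈ F,
         ∀ x₁ x₂ : {x : K // p x = θ.src},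
           ((x₁ : K), (x₂ : K)) ∈ V → (θ.toFun x₁, θ.toFun x₂) ∈ U) := by
  constructor
  · intro hF
    exact ⟨forward_image p q hp hps hF, fun U hU => forward_equic p q hp hps hF hU⟩
  · rintro ⟨h1, h2⟩
    exact backward_dir p q hp hps hpo hq h1 h2
end

section
/- Let q : (K,G) → (L,G) be an open extension of topological dynamical systems. If the uniform enveloping semigroupoid E_u(q) is compact (in the compact-open topology of C_q^q(K,K)), then it is a groupoid: every θ ∈ E_u(q) is a bijection from K_{s(θ)} onto K_{r(θ)} whose inverse θ⁻¹ is a continuous fiber map belonging to E_u(q), and the inversion map E_u(q) → E_u(q), θ ↦ θ⁻¹, is a homeomorphism. -/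
open Filter Topology Set Function MeasureTheory

/-- Composition `η ∘ θ` of continuous fiber maps in `C_q^q(K,K)` with `r(θ) = s(η)`. -/
def FiberMap.comp {K L : Type} [TopologicalSpace K] {q : K → L}
    (η θ : FiberMap q q) (h : θ.rng = η.src) : FiberMap q q where
  src := θ.src
  rng := η.rng
  toFun x := η.toFun ⟨θ.toFun x, (θ.maps_to x).trans h⟩
  maps_to x := η.maps_to _
  continuous_toFun := η.continuous_toFun.comp
    (θ.continuous_toFun.subtype_mk fun x => (θ.maps_to x).trans h)

/-- A set of fiber maps is a subsemigroupoid if it is closed under composition of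
composable elements. -/
def IsSubsemigroupoid {K L : Type} [TopologicalSpace K] {q : K → L}
    (S : Set (FiberMap q q)) : Prop :=
  ∀ θ ∈ S, ∀ η ∈ S, ∀ h : θ.rng = η.src, FiberMap.comp η θ h ∈ S

/-- The set `S(q)` of transition maps `φ_g|_{K_l} : K_l → K_{g•l}`. -/
def transitionSet (G : Type) {K L : Type} [Group G] [TopologicalSpace K]
    [MulAction G K] [MulAction G L] (q : K → L) : Set (FiberMap q q) :=
  {θ | ∃ g : G, θ.rng = g • θ.src ∧ ∀ x : {x : K // q x = θ.src}, θ.toFun x = g • (x : K)}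

/-- The uniform enveloping semigroupoid `E_u(q)`: the smallest subsemigroupoid of
`C_q^q(K,K)` containing `S(q)` that is closed in the compact-open topology. -/
def uniformEnveloping (G : Type) {K L : Type} [Group G] [TopologicalSpace K]
    [MulAction G K] [MulAction G L] (q : K → L) : Set (FiberMap q q) :=
  ⋂₀ {S : Set (FiberMap q q) | transitionSet G q ⊆ S ∧ IsSubsemigroupoid S ∧ IsClosed S}
section Aux

variable {K L : Type} [TopologicalSpace K] [CompactSpace K] [T2Space K]
  [TopologicalSpace L] [T2Space L] {q : K → L}

lemma isOpen_W {C O : Set K} (hC : IsCompact C) (hO : IsOpen O) :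
    IsOpen {θ : FiberMap q q | ∀ x : {x : K // q x = θ.src}, (x : K) ∈ C → θ.toFun x ∈ O} :=
  TopologicalSpace.isOpen_generateFrom_of_mem ⟨C, O, hC, hO, rfl⟩

lemma continuous_src_s5 (hq : Continuous q) (hqs : Function.Surjective q) :
    Continuous (FiberMap.src : FiberMap q q → L) := by
  rw [continuous_def]
  intro V hV
  have hset : (FiberMap.src ⁻¹' V : Set (FiberMap q q)) =
      {θ : FiberMap q q | ∀ x : {x : K // q x = θ.src},
        (x : K) ∈ q ⁻¹' Vᶜ → θ.toFun x ∈ (∅ : Set K)} := by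
    ext θ
    constructor
    · intro h x hx
      exact absurd (x.2 ▸ hx : θ.src ∈ Vᶜ) (by simpa using h)
    · intro h
      obtain ⟨x, hx⟩ := hqs θ.src
      by_contra hV'
      exact h ⟨x, hx⟩ (by simpa [Set.mem_preimage, hx] using hV')
  rw [hset]
  exact isOpen_W ((hV.isClosed_compl.preimage hq).isCompact) isOpen_empty

lemma continuous_rng (hq : Continuous q) (hqs : Function.Surjective q) :
    Continuous (FiberMap.rng : FiberMap q q → L) := by
  rw [continuous_def]
  intro V hV
  have hset : (FiberMap.rng ⁻¹' V : Set (FiberMap q q)) =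
      {θ : FiberMap q q | ∀ x : {x : K // q x = θ.src},
        (x : K) ∈ (Set.univ : Set K) → θ.toFun x ∈ q ⁻¹' V} := by
    ext θ
    constructor
    · intro h x _
      show q (θ.toFun x) ∈ V
      rw [θ.maps_to x]; exact h
    · intro h
      obtain ⟨x, hx⟩ := hqs θ.src
      have := h ⟨x, hx⟩ trivial
      rwa [Set.mem_preimage, θ.maps_to] at this
  rw [hset]
  exact isOpen_W isCompact_univ (hV.preimage hq)

lemma FiberMap.ext' {θ η : FiberMap q q} (hs : θ.src = η.src) (hr : θ.rng = η.rng)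
    (hf : ∀ (x : K) (hx : q x = θ.src), θ.toFun ⟨x, hx⟩ = η.toFun ⟨x, hs ▸ hx⟩) : θ = η := by
  obtain ⟨s1, r1, f1, m1, c1⟩ := θ
  obtain ⟨s2, r2, f2, m2, c2⟩ := η
  dsimp at hs hr hf
  subst hs; subst hr
  have : f1 = f2 := funext fun x => hf x.1 x.2
  subst this
  rfl

/-- `η` is a "one-sided" inverse data for `θ`. -/
def FiberMap.Pre (θ η : FiberMap q q) : Prop :=
  η.src = θ.rng ∧ η.rng = θ.src ∧
    ∀ (x : K) (hx : q x = θ.src) (h2 : q (θ.toFun ⟨x, hx⟩) = η.src),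
      η.toFun ⟨θ.toFun ⟨x, hx⟩, h2⟩ = x

/-- `η` is a two-sided inverse of `θ`. -/
def FiberMap.InvPair (θ η : FiberMap q q) : Prop :=
  FiberMap.Pre θ η ∧ FiberMap.Pre η θ

lemma isClosed_pre (hq : Continuous q) (hqs : Function.Surjective q) (hqo : IsOpenMap q) :
    IsClosed {p : FiberMap q q × FiberMap q q | FiberMap.Pre p.1 p.2} := by
  rw [← isOpen_compl_iff, isOpen_iff_forall_mem_open]
  rintro ⟨θ, η⟩ hp
  simp only [Set.mem_compl_iff, Set.mem_setOf_eq] at hp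
  by_cases h1 : η.src = θ.rng
  · by_cases h2 : η.rng = θ.src
    · -- the pointwise condition fails
      have hx : ∃ (x : K) (hx : q x = θ.src) (h2 : q (θ.toFun ⟨x, hx⟩) = η.src),
          η.toFun ⟨θ.toFun ⟨x, hx⟩, h2⟩ ≠ x := by
        by_contra hc
        push_neg at hc
        exact hp ⟨h1, h2, hc⟩
      obtain ⟨x, hx, hx2, hne⟩ := hx
      obtain ⟨O1, O2, hO1, hO2, hzO1, hxO2, hdisj⟩ := t2_separation hne
      -- continuity of η at the point θ x
      obtain ⟨Uy, hUy, hUyeq⟩ := isOpen_induced_iff.mp (hO1.preimage η.continuous_toFun)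
      have hyUy : θ.toFun ⟨x, hx⟩ ∈ Uy := by
        have h : (⟨θ.toFun ⟨x, hx⟩, hx2⟩ : {y : K // q y = η.src}) ∈ η.toFun ⁻¹' O1 := hzO1
        rw [← hUyeq] at h
        exact h
      obtain ⟨D, hD, hyD, hDU⟩ := exists_compact_subset hUy hyUy
      -- continuity of θ at x
      have hop : IsOpen (θ.toFun ⁻¹' interior D) := isOpen_interior.preimage θ.continuous_toFun
      obtain ⟨Ux, hUx, hUxeq⟩ := isOpen_induced_iff.mp hop
      have hxUx : x ∈ Ux ∩ O2 := by
        refine ⟨?_, hxO2⟩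
        have h : (⟨x, hx⟩ : {y : K // q y = θ.src}) ∈ θ.toFun ⁻¹' interior D := hyD
        rw [← hUxeq] at h
        exact h
      obtain ⟨C, hC, hxC, hCsub⟩ := exists_compact_subset (hUx.inter hO2) hxUx
      refine ⟨({θ' : FiberMap q q | ∀ x' : {z : K // q z = θ'.src},
            (x' : K) ∈ C → θ'.toFun x' ∈ interior D} ∩
            FiberMap.src ⁻¹' (q '' interior C)) ×ˢ
          {η' : FiberMap q q | ∀ y' : {z : K // q z = η'.src},
            (y' : K) ∈ D → η'.toFun y' ∈ O1}, ?_, ?_, ?_⟩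
      · rintro ⟨θ'', η''⟩ ⟨⟨hW1, hsrc⟩, hW2⟩
        simp only [Set.mem_compl_iff, Set.mem_setOf_eq]
        rintro ⟨hP1, hP2, hP3⟩
        obtain ⟨x₀, hx₀C, hqx₀⟩ := hsrc
        have hy'' : θ''.toFun ⟨x₀, hqx₀⟩ ∈ interior D := hW1 ⟨x₀, hqx₀⟩ (interior_subset hx₀C)
        have h2'' : q (θ''.toFun ⟨x₀, hqx₀⟩) = η''.src := (θ''.maps_to _).trans hP1.symm
        have hmem : η''.toFun ⟨θ''.toFun ⟨x₀, hqx₀⟩, h2''⟩ ∈ O1 :=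
          hW2 ⟨_, h2''⟩ (interior_subset hy'')
        rw [hP3 x₀ hqx₀ h2''] at hmem
        have hx₀O2 : x₀ ∈ O2 := (hCsub (interior_subset hx₀C)).2
        exact hdisj.ne_of_mem hmem hx₀O2 rfl
      · exact (IsOpen.inter (isOpen_W hC isOpen_interior)
            ((hqo _ isOpen_interior).preimage (continuous_src_s5 hq hqs))).prod
          (isOpen_W hD hO1)
      · refine ⟨⟨?_, ⟨x, hxC, hx⟩⟩, ?_⟩
        · intro x' hx'C
          have : (x' : K) ∈ Ux := (hCsub hx'C).1
          have h : x' ∈ θ.toFun ⁻¹' interior D := by rw [← hUxeq]; exact this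
          exact h
        · intro y' hy'D
          have : (y' : K) ∈ Uy := hDU hy'D
          have h : y' ∈ η.toFun ⁻¹' O1 := by rw [← hUyeq]; exact this
          exact h
    · -- η.rng ≠ θ.src
      obtain ⟨V1, V2, hV1, hV2, hm1, hm2, hd⟩ := t2_separation h2
      refine ⟨(FiberMap.src ⁻¹' V2) ×ˢ (FiberMap.rng ⁻¹' V1), ?_, ?_, ⟨hm2, hm1⟩⟩
      · rintro ⟨θ'', η''⟩ ⟨ha, hb⟩
        simp only [Set.mem_compl_iff, Set.mem_setOf_eq]
        rintro ⟨-, hP2, -⟩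
        exact hd.ne_of_mem hb ha hP2
      · exact ((hV2.preimage (continuous_src_s5 hq hqs)).prod
          (hV1.preimage (continuous_rng hq hqs)))
  · -- η.src ≠ θ.rng
    obtain ⟨V1, V2, hV1, hV2, hm1, hm2, hd⟩ := t2_separation h1
    refine ⟨(FiberMap.rng ⁻¹' V2) ×ˢ (FiberMap.src ⁻¹' V1), ?_, ?_, ⟨hm2, hm1⟩⟩
    · rintro ⟨θ'', η''⟩ ⟨ha, hb⟩
      simp only [Set.mem_compl_iff, Set.mem_setOf_eq]
      rintro ⟨hP1, -, -⟩
      exact hd.ne_of_mem hb ha hP1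
    · exact ((hV2.preimage (continuous_rng hq hqs)).prod
        (hV1.preimage (continuous_src_s5 hq hqs)))

lemma isClosed_invPair (hq : Continuous q) (hqs : Function.Surjective q) (hqo : IsOpenMap q) :
    IsClosed {p : FiberMap q q × FiberMap q q | FiberMap.InvPair p.1 p.2} := by
  have : {p : FiberMap q q × FiberMap q q | FiberMap.InvPair p.1 p.2} =
      {p : FiberMap q q × FiberMap q q | FiberMap.Pre p.1 p.2} ∩
        Prod.swap ⁻¹' {p : FiberMap q q × FiberMap q q | FiberMap.Pre p.1 p.2} := by
    ext p; rfl
  rw [this]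
  exact (isClosed_pre hq hqs hqo).inter ((isClosed_pre hq hqs hqo).preimage continuous_swap)
lemma pre_comp {θ1 η1 θ2 η2 : FiberMap q q} (hA : FiberMap.Pre θ1 η1) (hB : FiberMap.Pre θ2 η2)
    (h : θ1.rng = θ2.src) (h' : η2.rng = η1.src) :
    FiberMap.Pre (FiberMap.comp θ2 θ1 h) (FiberMap.comp η1 η2 h') := by
  refine ⟨hB.1, hA.2.1, ?_⟩
  intro x hx h2
  have e1 : η2.toFun ⟨(FiberMap.comp θ2 θ1 h).toFun ⟨x, hx⟩, h2⟩ = θ1.toFun ⟨x, hx⟩ :=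
    hB.2.2 (θ1.toFun ⟨x, hx⟩) ((θ1.maps_to _).trans h) h2
  have p' : q (θ1.toFun ⟨x, hx⟩) = η1.src := (θ1.maps_to _).trans hA.1.symm
  show η1.toFun ⟨η2.toFun ⟨(FiberMap.comp θ2 θ1 h).toFun ⟨x, hx⟩, h2⟩, _⟩ = x
  have e2 : (⟨η2.toFun ⟨(FiberMap.comp θ2 θ1 h).toFun ⟨x, hx⟩, h2⟩,
      (η2.maps_to _).trans h'⟩ : {y : K // q y = η1.src}) = ⟨θ1.toFun ⟨x, hx⟩, p'⟩ :=
    Subtype.ext e1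
  rw [e2]
  exact hA.2.2 x hx p'

lemma invPair_unique {θ η η' : FiberMap q q}
    (h1 : FiberMap.InvPair θ η) (h2 : FiberMap.InvPair θ η') : η = η' := by
  have hs : η.src = η'.src := h1.1.1.trans h2.1.1.symm
  have hr : η.rng = η'.rng := h1.1.2.1.trans h2.1.2.1.symm
  refine FiberMap.ext' hs hr ?_
  intro y hy
  have hy' : q y = η'.src := hs ▸ hy
  have px : q (η'.toFun ⟨y, hy'⟩) = θ.src := (η'.maps_to _).trans h2.1.2.1
  have e1 : θ.toFun ⟨η'.toFun ⟨y, hy'⟩, px⟩ = y := h2.2.2.2 y hy' px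
  have pz : q (θ.toFun ⟨η'.toFun ⟨y, hy'⟩, px⟩) = η.src := (θ.maps_to _).trans h1.1.1.symm
  have e2 : η.toFun ⟨θ.toFun ⟨η'.toFun ⟨y, hy'⟩, px⟩, pz⟩ = η'.toFun ⟨y, hy'⟩ :=
    h1.1.2.2 _ px pz
  have e3 : (⟨θ.toFun ⟨η'.toFun ⟨y, hy'⟩, px⟩, pz⟩ : {z : K // q z = η.src}) = ⟨y, hy⟩ :=
    Subtype.ext e1
  rw [e3] at e2
  rw [e2]
end Aux

/-- If the uniform enveloping semigroupoid `E_u(q)` of an open extension of topological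
dynamical systems is compact, then it is a groupoid: every element has a (two-sided)
inverse in `E_u(q)`, and the inversion map is a homeomorphism of `E_u(q)`. -/
theorem statement5 {G K L : Type} [Group G] [TopologicalSpace G] [IsTopologicalGroup G]
    [T2Space G] [TopologicalSpace K] [CompactSpace K] [T2Space K] [Nonempty K]
    [TopologicalSpace L] [CompactSpace L] [T2Space L] [Nonempty L]
    [MulAction G K] [ContinuousSMul G K] [MulAction G L] [ContinuousSMul G L]
    (q : K → L) (hq : Continuous q) (hqs : Function.Surjective q) (hqo : IsOpenMap q)
    (heq : ∀ (g : G) (x : K), q (g • x) = g • q x)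
    (hcomp : IsCompact (uniformEnveloping G q)) :
    (∀ θ ∈ uniformEnveloping G q, ∃ η ∈ uniformEnveloping G q,
      ∃ (hs : η.src = θ.rng) (hr : η.rng = θ.src),
        (∀ x : {x : K // q x = θ.src},
          η.toFun ⟨θ.toFun x, (θ.maps_to x).trans hs.symm⟩ = (x : K)) ∧
        (∀ y : {y : K // q y = η.src},
          θ.toFun ⟨η.toFun y, (η.maps_to y).trans hr⟩ = (y : K))) ∧
    (∃ inv : {θ : FiberMap q q // θ ∈ uniformEnveloping G q} →
        {θ : FiberMap q q // θ ∈ uniformEnveloping G q},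
      Continuous inv ∧ inv ∘ inv = id ∧
      ∀ θ : {θ : FiberMap q q // θ ∈ uniformEnveloping G q},
        (inv θ).1.src = θ.1.rng ∧ (inv θ).1.rng = θ.1.src ∧
        (∀ (x : {x : K // q x = θ.1.src}) (h : q (θ.1.toFun x) = (inv θ).1.src),
          (inv θ).1.toFun ⟨θ.1.toFun x, h⟩ = (x : K))) := by
  classical
  set E := uniformEnveloping G q with hE
  have hEmem : ∀ {θ : FiberMap q q}, θ ∈ E ↔ ∀ S, transitionSet G q ⊆ S →
      IsSubsemigroupoid S → IsClosed S → θ ∈ S := by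
    intro θ
    constructor
    · intro h S h1 h2 h3; exact h S ⟨h1, h2, h3⟩
    · intro h S hS; exact h S hS.1 hS.2.1 hS.2.2
  have hTE : transitionSet G q ⊆ E := fun θ hθ => hEmem.2 fun S h1 _ _ => h1 hθ
  have hEsemi : IsSubsemigroupoid E := by
    intro θ hθ η hη h
    refine hEmem.2 fun S h1 h2 h3 => ?_
    exact h2 θ (hEmem.1 hθ S h1 h2 h3) η (hEmem.1 hη S h1 h2 h3) h
  set Adm : Set (FiberMap q q) := {θ | ∃ η ∈ E, FiberMap.InvPair θ η} with hAdmDef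
  haveI : CompactSpace {η : FiberMap q q // η ∈ E} := isCompact_iff_compactSpace.mp hcomp
  -- Adm is closed
  have hAdmClosed : IsClosed Adm := by
    have himg : Adm = Prod.snd ''
        {p : {η : FiberMap q q // η ∈ E} × FiberMap q q | FiberMap.InvPair p.2 p.1.1} := by
      ext θ
      constructor
      · rintro ⟨η, hηE, hP⟩; exact ⟨(⟨η, hηE⟩, θ), hP, rfl⟩
      · rintro ⟨⟨η, θ'⟩, hP, rfl⟩; exact ⟨η.1, η.2, hP⟩
    rw [himg]
    refine isClosedMap_snd_of_compactSpace _ ?_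
    have : {p : {η : FiberMap q q // η ∈ E} × FiberMap q q | FiberMap.InvPair p.2 p.1.1} =
        (fun p : {η : FiberMap q q // η ∈ E} × FiberMap q q => (p.2, p.1.1)) ⁻¹'
          {p : FiberMap q q × FiberMap q q | FiberMap.InvPair p.1 p.2} := rfl
    rw [this]
    exact (isClosed_invPair hq hqs hqo).preimage
      (continuous_snd.prodMk (continuous_subtype_val.comp continuous_fst))
  -- Adm contains the transition maps
  have hAdmTrans : transitionSet G q ⊆ Adm := by
    rintro θ ⟨g, hg, hfun⟩
    refine ⟨{ src := θ.rng, rng := g⁻¹ • θ.rng, toFun := fun y => g⁻¹ • (y : K),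
              maps_to := fun y => by rw [heq, y.2],
              continuous_toFun := continuous_subtype_val.const_smul _ }, ?_, ?_, ?_⟩
    · exact hTE ⟨g⁻¹, rfl, fun y => rfl⟩
    · refine ⟨rfl, by show g⁻¹ • θ.rng = θ.src; rw [hg, inv_smul_smul], ?_⟩
      intro x hx h2
      show g⁻¹ • θ.toFun ⟨x, hx⟩ = x
      rw [hfun]; exact inv_smul_smul g x
    · refine ⟨by show θ.src = g⁻¹ • θ.rng; rw [hg, inv_smul_smul], rfl, ?_⟩
      intro y hy h2
      show θ.toFun ⟨g⁻¹ • y, h2⟩ = y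
      rw [hfun ⟨g⁻¹ • y, h2⟩]; exact smul_inv_smul g y
  -- Adm is a subsemigroupoid
  have hAdmSemi : IsSubsemigroupoid Adm := by
    rintro θ ⟨α, hαE, hα⟩ η ⟨β, hβE, hβ⟩ h
    have h₂ : β.rng = α.src := hβ.1.2.1.trans (h.symm.trans hα.1.1.symm)
    refine ⟨FiberMap.comp α β h₂, hEsemi β hβE α hαE h₂, ?_, ?_⟩
    · exact pre_comp hα.1 hβ.1 h h₂
    · exact pre_comp hβ.2 hα.2 h₂ h
  have hEAdm : E ⊆ Adm := sInter_subset_of_mem ⟨hAdmTrans, hAdmSemi, hAdmClosed⟩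
  constructor
  · intro θ hθ
    obtain ⟨η, hηE, hP⟩ := hEAdm hθ
    exact ⟨η, hηE, hP.1.1, hP.1.2.1,
      fun x => hP.1.2.2 x.1 x.2 _, fun y => hP.2.2.2 y.1 y.2 _⟩
  · choose invf hinvE hinvP using fun θ : {θ : FiberMap q q // θ ∈ E} => hEAdm θ.2
    refine ⟨fun θ => ⟨invf θ, hinvE θ⟩, ?_, ?_, ?_⟩
    · rw [continuous_iff_isClosed]
      intro C hC
      have himg : (fun θ : {θ : FiberMap q q // θ ∈ E} =>
            (⟨invf θ, hinvE θ⟩ : {θ : FiberMap q q // θ ∈ E})) ⁻¹' C =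
          Prod.snd '' ({p : {θ : FiberMap q q // θ ∈ E} × {θ : FiberMap q q // θ ∈ E} |
            FiberMap.InvPair p.2.1 p.1.1} ∩ C ×ˢ Set.univ) := by
        ext θ
        constructor
        · intro h
          exact ⟨(⟨invf θ, hinvE θ⟩, θ), ⟨hinvP θ, h, trivial⟩, rfl⟩
        · rintro ⟨⟨p1, p2⟩, ⟨hip, hC1, -⟩, rfl⟩
          have he : p1.1 = invf p2 := invPair_unique hip (hinvP p2)
          have : p1 = ⟨invf p2, hinvE p2⟩ := Subtype.ext he
          rw [this] at hC1
          exact hC1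
      rw [himg]
      refine isClosedMap_snd_of_compactSpace _ ?_
      refine IsClosed.inter ?_ (hC.prod isClosed_univ)
      have : {p : {θ : FiberMap q q // θ ∈ E} × {θ : FiberMap q q // θ ∈ E} |
            FiberMap.InvPair p.2.1 p.1.1} =
          (fun p : {θ : FiberMap q q // θ ∈ E} × {θ : FiberMap q q // θ ∈ E} =>
            ((p.2.1 : FiberMap q q), (p.1.1 : FiberMap q q))) ⁻¹'
            {p : FiberMap q q × FiberMap q q | FiberMap.InvPair p.1 p.2} := rfl
      rw [this]
      exact (isClosed_invPair hq hqs hqo).preimage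
        ((continuous_subtype_val.comp continuous_snd).prodMk
          (continuous_subtype_val.comp continuous_fst))
    · funext θ
      refine Subtype.ext ?_
      show invf ⟨invf θ, hinvE θ⟩ = θ.1
      have h1 : FiberMap.InvPair (invf θ) (invf ⟨invf θ, hinvE θ⟩) := hinvP ⟨invf θ, hinvE θ⟩
      have h2 : FiberMap.InvPair (invf θ) θ.1 := ⟨(hinvP θ).2, (hinvP θ).1⟩
      exact invPair_unique h1 h2
    · intro θ
      exact ⟨(hinvP θ).1.1, (hinvP θ).1.2.1, fun x h => (hinvP θ).1.2.2 x.1 x.2 h⟩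
end
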